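/- Let S, T ⊆ [ω₂]^ω and let A_S, A_T be disjoint stationary subsets of ω₁ such that S is A_S-projective stationary and T is A_T-projective stationary. Then the set P(S,T) = {σ ∈ [ω₂]^ω : (σ ∩ ω₁ ∈ A_S → σ ∈ S) ∧ (σ ∩ ω₁ ∈ A_T → σ ∈ T)} is projective stationary. -/

import Mathlib

/-- The first uncountable ordinal. -/
noncomputable def ω1 : Ordinal.{0} := (Cardinal.aleph 1).ord
/-- The second uncountable ordinal. -/
noncomputable def ω2 : Ordinal.{0} := (Cardinal.aleph 2).ord

-- The order type of a set of ordinals (correct whenever the set is small, e.g. countable).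
open Classical in
noncomputable def otp (σ : Set Ordinal.{0}) : Ordinal.{0} :=
  if h : ∃ o : Ordinal.{0}, Ordinal.lift.{1, 0} o =
      Ordinal.type ((· < ·) : σ → σ → Prop) then h.choose else 0

/-- `σ ∈ [α]^ω`: σ is a countably infinite subset of (the ordinals below) α. -/
def MemCtble (α : Ordinal.{0}) (σ : Set Ordinal.{0}) : Prop :=
  σ.Countable ∧ σ.Infinite ∧ ∀ x ∈ σ, x < α

/-- `C` is a club subset of `[α]^ω`: all members lie in `[α]^ω`, `C` is closed under
unions of increasing ω-chains, and `C` is cofinal under inclusion. -/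
def IsClubIn (α : Ordinal.{0}) (C : Set (Set Ordinal.{0})) : Prop :=
  (∀ σ ∈ C, MemCtble α σ) ∧
  (∀ f : ℕ → Set Ordinal.{0}, (∀ n, f n ∈ C) → (∀ n, f n ⊆ f (n + 1)) →
    (⋃ n, f n) ∈ C) ∧
  (∀ σ, MemCtble α σ → ∃ τ ∈ C, σ ⊆ τ)

/-- `S` is stationary in `[α]^ω`: it meets every club of `[α]^ω`. -/
def StatIn (α : Ordinal.{0}) (S : Set (Set Ordinal.{0})) : Prop :=
  ∀ C, IsClubIn α C → (S ∩ C).Nonempty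

/-- `C` is a closed unbounded subset of the ordinal `κ`. -/
def IsClubBelow (κ : Ordinal.{0}) (C : Set Ordinal.{0}) : Prop :=
  (∀ x ∈ C, x < κ) ∧ (∀ β < κ, ∃ x ∈ C, β ≤ x) ∧
  (∀ S : Set Ordinal.{0}, S ⊆ C → S.Nonempty → sSup S < κ → sSup S ∈ C)

/-- `S` is a stationary subset of the ordinal `κ`: it meets every club of `κ`. -/
def StatBelow (κ : Ordinal.{0}) (S : Set Ordinal.{0}) : Prop :=
  ∀ C, IsClubBelow κ C → (S ∩ C).Nonempty

/-- The tilde operation: `α ∈ tilde X` iff `ω1 ≤ α < ω2` and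
`{σ ∈ [α]^ω : otp σ ∈ X}` contains a club of `[α]^ω`. -/
def tilde (X : Set Ordinal.{0}) : Set Ordinal.{0} :=
  {α | ω1 ≤ α ∧ α < ω2 ∧ ∃ C, IsClubIn α C ∧ C ⊆ {σ | otp σ ∈ X}}

/-- `σ ∩ ω₁` equals the ordinal `γ` (i.e. as sets, `σ ∩ ω₁ = {x : x < γ}`). -/
def MeetO1 (σ : Set Ordinal.{0}) (γ : Ordinal.{0}) : Prop :=
  σ ∩ Set.Iio ω1 = Set.Iio γ

/-- `S ⊆ [ω₂]^ω` is `A`-projective stationary. -/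
def ProjStatOn (A : Set Ordinal.{0}) (S : Set (Set Ordinal.{0})) : Prop :=
  ∀ B ⊆ A, StatBelow ω1 B → StatIn ω2 {σ | σ ∈ S ∧ ∃ γ ∈ B, MeetO1 σ γ}

/-- `S ⊆ [ω₂]^ω` is projective stationary. -/
def ProjStat (S : Set (Set Ordinal.{0})) : Prop :=
  ∀ B : Set Ordinal.{0}, (∀ x ∈ B, x < ω1) → StatBelow ω1 B →
    StatIn ω2 {σ | σ ∈ S ∧ ∃ γ ∈ B, MeetO1 σ γ}

section Aux

open Cardinal Ordinal Set in
section


lemma omega1_lt_omega2 : ω1 < ω2 := Cardinal.ord_lt_ord.2 (Cardinal.aleph_lt_aleph.2 one_lt_two)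

lemma omega1_isLimit : Order.IsSuccLimit ω1 := Cardinal.isSuccLimit_ord (Cardinal.aleph0_le_aleph 1)

lemma omega1_pos : 0 < ω1 := omega1_isLimit.pos

lemma nat_lt_omega1 (n : ℕ) : (n : Ordinal.{0}) < ω1 :=
  (Ordinal.nat_lt_omega0 n).trans_le (by
    rw [← Cardinal.ord_aleph0]
    exact Cardinal.ord_le_ord.2 (Cardinal.aleph0_lt_aleph_one).le)

lemma countable_Iio {α : Ordinal.{0}} (h : α < ω1) : (Set.Iio α).Countable := by
  rw [Cardinal.countable_iff_lt_aleph_one]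
  rw [Ordinal.mk_Iio_ordinal, Cardinal.lift_lt_aleph_one]
  exact Cardinal.lt_ord.1 h

lemma cof_omega1 : Ordinal.cof ω1 = Cardinal.aleph 1 :=
  Cardinal.isRegular_aleph_one.cof_eq

lemma sSup_lt_omega1 {s : Set Ordinal.{0}} (hc : s.Countable) (hs : ∀ x ∈ s, x < ω1) :
    sSup s < ω1 := by
  rcases s.eq_empty_or_nonempty with rfl | hne
  · simpa [csSup_empty, Ordinal.bot_eq_zero] using omega1_pos
  · obtain ⟨f, rfl⟩ := hc.exists_eq_range hne
    have : iSup f < ω1 := by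
      apply Ordinal.iSup_lt_ord
      · rw [cof_omega1, Cardinal.mk_eq_aleph0]
        exact Cardinal.aleph0_lt_aleph_one
      · exact fun i => hs _ (Set.mem_range_self i)
    exact this

lemma bddAbove_of_lt_omega1 {s : Set Ordinal.{0}} (hs : ∀ x ∈ s, x < ω1) : BddAbove s :=
  ⟨ω1, fun x hx => (hs x hx).le⟩

lemma MeetO1_unique {σ : Set Ordinal.{0}} {γ γ' : Ordinal.{0}}
    (h : σ ∩ Set.Iio ω1 = Set.Iio γ) (h' : σ ∩ Set.Iio ω1 = Set.Iio γ') : γ = γ' := by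
  have : Set.Iio γ = Set.Iio γ' := h ▸ h'
  by_contra hne
  rcases Ne.lt_or_gt hne with hl | hl
  · have : γ ∈ Set.Iio γ := this ▸ (Set.mem_Iio.2 hl)
    simp at this
  · have : γ' ∈ Set.Iio γ' := this ▸ (Set.mem_Iio.2 hl)
    simp at this

lemma club_inter {C1 C2 : Set Ordinal.{0}} (h1 : IsClubBelow ω1 C1) (h2 : IsClubBelow ω1 C2) :
    IsClubBelow ω1 (C1 ∩ C2) := by
  classical
  refine ⟨fun x hx => h1.1 x hx.1, ?_, ?_⟩
  · intro β hβ
    -- skolem functions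
    set A : Ordinal.{0} → Ordinal.{0} := fun δ => if h : δ < ω1 then (h1.2.1 δ h).choose else 0
      with hA
    set B : Ordinal.{0} → Ordinal.{0} := fun δ => if h : δ < ω1 then (h2.2.1 δ h).choose else 0
      with hB
    have hAspec : ∀ δ, δ < ω1 → A δ ∈ C1 ∧ δ ≤ A δ ∧ A δ < ω1 := by
      intro δ h
      have := (h1.2.1 δ h).choose_spec
      simp only [hA, dif_pos h]
      exact ⟨this.1, this.2, h1.1 _ this.1⟩
    have hBspec : ∀ δ, δ < ω1 → B δ ∈ C2 ∧ δ ≤ B δ ∧ B δ < ω1 := by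
      intro δ h
      have := (h2.2.1 δ h).choose_spec
      simp only [hB, dif_pos h]
      exact ⟨this.1, this.2, h2.1 _ this.1⟩
    set a : ℕ → Ordinal.{0} := fun n => Nat.rec (A β) (fun _ x => A (B x)) n with ha
    have ha0 : a 0 = A β := rfl
    have hasucc : ∀ n, a (n + 1) = A (B (a n)) := fun n => rfl
    have key : ∀ n, a n ∈ C1 ∧ a n < ω1 := by
      intro n
      induction n with
      | zero => exact ⟨(hAspec β hβ).1, (hAspec β hβ).2.2⟩
      | succ n ih =>
        have hb := hBspec (a n) ih.2
        rw [hasucc]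
        exact ⟨(hAspec _ hb.2.2).1, (hAspec _ hb.2.2).2.2⟩
    have hble : ∀ n, a n ≤ B (a n) ∧ B (a n) ∈ C2 ∧ B (a n) ≤ a (n+1) := by
      intro n
      have hb := hBspec (a n) (key n).2
      refine ⟨hb.2.1, hb.1, ?_⟩
      rw [hasucc]
      exact (hAspec _ hb.2.2).2.1
    have hlt1 : ∀ x ∈ Set.range a, x < ω1 := by rintro x ⟨n, rfl⟩; exact (key n).2
    have hγlt : sSup (Set.range a) < ω1 := sSup_lt_omega1 (Set.countable_range a) hlt1
    set γ := sSup (Set.range a) with hγ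
    have hbdd : BddAbove (Set.range a) := ⟨ω1, fun x hx => (hlt1 x hx).le⟩
    have hne : (Set.range a).Nonempty := (Set.range_nonempty _)
    have hγ1 : γ ∈ C1 := h1.2.2 _ (fun x hx => by rcases hx with ⟨n, rfl⟩; exact (key n).1) hne hγlt
    have hble2 : ∀ x ∈ Set.range (fun n => B (a n)), x < ω1 := by
      rintro x ⟨n, rfl⟩; exact (hBspec (a n) (key n).2).2.2
    have heq : sSup (Set.range (fun n => B (a n))) = γ := by
      apply le_antisymm
      · apply csSup_le (Set.range_nonempty _)
        rintro x ⟨n, rfl⟩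
        exact le_trans (hble n).2.2 (le_csSup hbdd ⟨n+1, rfl⟩)
      · apply csSup_le hne
        rintro x ⟨n, rfl⟩
        exact le_trans (hble n).1
          (le_csSup ⟨ω1, fun x hx => (hble2 x hx).le⟩ ⟨n, rfl⟩)
    have hγ2 : γ ∈ C2 := by
      rw [← heq]
      exact h2.2.2 _ (fun x hx => by rcases hx with ⟨n, rfl⟩; exact (hble n).2.1)
        (Set.range_nonempty _) (heq ▸ hγlt)
    exact ⟨γ, ⟨hγ1, hγ2⟩, le_trans (hAspec β hβ).2.1 (le_csSup hbdd ⟨0, rfl⟩)⟩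
  · intro s hs hne hlt
    exact ⟨h1.2.2 s (fun x hx => (hs hx).1) hne hlt, h2.2.2 s (fun x hx => (hs hx).2) hne hlt⟩

open Classical in

noncomputable def chainF (C : Set (Set Ordinal.{0})) : Ordinal.{0} → Set Ordinal.{0} :=
  Ordinal.lt_wf.fix (fun α ih =>
    if h : ∃ τ ∈ C, (Set.range (fun n : ℕ => (n : Ordinal.{0})) ∪ Set.Iio α ∪
        ⋃ β : Set.Iio α, ih β.1 β.2) ⊆ τ then h.choose else ∅)

/-- The "base" set that `chainF C α` is chosen to extend. -/
noncomputable def chainBase (C : Set (Set Ordinal.{0})) (α : Ordinal.{0}) : Set Ordinal.{0} :=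
  Set.range (fun n : ℕ => (n : Ordinal.{0})) ∪ Set.Iio α ∪ ⋃ β : Set.Iio α, chainF C β.1

open Classical in
lemma chainF_eq (C : Set (Set Ordinal.{0})) (α : Ordinal.{0}) :
    chainF C α = if h : ∃ τ ∈ C, chainBase C α ⊆ τ then h.choose else ∅ := by
  rw [chainF, Ordinal.lt_wf.fix_eq]
  rfl

lemma chainF_spec {C : Set (Set Ordinal.{0})} (hC : IsClubIn ω2 C) :
    ∀ α < ω1, chainF C α ∈ C ∧ chainBase C α ⊆ chainF C α := by
  intro α
  induction α using Ordinal.induction with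
  | _ α ih =>
  intro hα
  haveI : Countable (Set.Iio α) := (countable_Iio hα).to_subtype
  have hbc : (chainBase C α).Countable := by
    refine ((Set.countable_range _).union (countable_Iio hα)).union ?_
    exact Set.countable_iUnion fun β =>
      (hC.1 _ (ih β.1 β.2 (β.2.trans hα)).1).1
  have hbi : (chainBase C α).Infinite := by
    have hinj : Function.Injective (fun n : ℕ => (n : Ordinal.{0})) := fun a b h => by
      simpa using h
    exact (Set.infinite_range_of_injective hinj).mono (fun x hx => Or.inl (Or.inl hx))
  have hbb : ∀ x ∈ chainBase C α, x < ω2 := by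
    rintro x ((hx | hx) | hx)
    · obtain ⟨n, rfl⟩ := hx
      exact (nat_lt_omega1 n).trans omega1_lt_omega2
    · exact (hx.trans hα).trans omega1_lt_omega2
    · obtain ⟨β, hβ⟩ := Set.mem_iUnion.1 hx
      exact (hC.1 _ (ih β.1 β.2 (β.2.trans hα)).1).2.2 x hβ
  have h : ∃ τ ∈ C, chainBase C α ⊆ τ := hC.2.2 _ ⟨hbc, hbi, hbb⟩
  rw [chainF_eq, dif_pos h]
  exact h.choose_spec

lemma chainF_mono {C : Set (Set Ordinal.{0})} (hC : IsClubIn ω2 C) {β α : Ordinal.{0}}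
    (hβα : β ≤ α) (hα : α < ω1) : chainF C β ⊆ chainF C α := by
  rcases eq_or_lt_of_le hβα with rfl | hlt
  · exact subset_rfl
  · intro x hx
    exact (chainF_spec hC α hα).2 (Or.inr (Set.mem_iUnion.2 ⟨⟨β, hlt⟩, hx⟩))

noncomputable def gfun (C : Set (Set Ordinal.{0})) (β : Ordinal.{0}) : Ordinal.{0} :=
  sSup (chainF C β ∩ Set.Iio ω1) + 1

lemma gfun_lt {C : Set (Set Ordinal.{0})} (hC : IsClubIn ω2 C) {β : Ordinal.{0}}
    (hβ : β < ω1) : gfun C β < ω1 := by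
  have h1 : sSup (chainF C β ∩ Set.Iio ω1) < ω1 :=
    sSup_lt_omega1 ((hC.1 _ (chainF_spec hC β hβ).1).1.mono Set.inter_subset_left)
      (fun x hx => hx.2)
  rw [gfun, Ordinal.add_one_eq_succ]
  exact omega1_isLimit.succ_lt h1

lemma lt_gfun {C : Set (Set Ordinal.{0})} {β x : Ordinal.{0}}
    (hx : x ∈ chainF C β ∩ Set.Iio ω1) : x < gfun C β := by
  have : x ≤ sSup (chainF C β ∩ Set.Iio ω1) :=
    le_csSup (bddAbove_of_lt_omega1 fun y hy => hy.2) hx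
  rw [gfun, Ordinal.add_one_eq_succ]
  exact this.trans_lt (Order.lt_succ _)

lemma proj_lemma {C : Set (Set Ordinal.{0})} (hC : IsClubIn ω2 C) {B : Set Ordinal.{0}}
    (hB : StatBelow ω1 B) : ∃ τ ∈ C, ∃ γ ∈ B, MeetO1 τ γ := by
  classical
  set g := gfun C with hg
  set D := {γ : Ordinal.{0} | γ < ω1 ∧ Order.IsSuccLimit γ ∧ ∀ β < γ, g β < γ} with hD
  have hDclub : IsClubBelow ω1 D := by
    refine ⟨fun x hx => hx.1, ?_, ?_⟩
    · -- unbounded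
      intro β₀ hβ₀
      have hsuplt : ∀ δ, δ < ω1 → sSup (g '' Set.Iic δ) < ω1 := by
        intro δ hδ
        apply sSup_lt_omega1
        · exact Set.Countable.image
            ((countable_Iio (omega1_isLimit.succ_lt hδ)).mono
              (fun x hx => lt_of_le_of_lt hx (Order.lt_succ δ))) g
        · rintro x ⟨y, hy, rfl⟩
          exact gfun_lt hC (lt_of_le_of_lt hy hδ)
      set c : ℕ → Ordinal.{0} :=
        fun n => Nat.rec β₀ (fun _ x => max (sSup (g '' Set.Iic x)) x + 1) n with hc
      have hc0 : c 0 = β₀ := rfl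
      have hcs : ∀ n, c (n + 1) = max (sSup (g '' Set.Iic (c n))) (c n) + 1 := fun n => rfl
      have hclt : ∀ n, c n < ω1 := by
        intro n
        induction n with
        | zero => exact hβ₀
        | succ n ihn =>
          rw [hcs, Ordinal.add_one_eq_succ]
          exact omega1_isLimit.succ_lt (max_lt (hsuplt _ ihn) ihn)
      have hcmono : ∀ n, c n < c (n + 1) := by
        intro n
        rw [hcs]
        calc c n ≤ max (sSup (g '' Set.Iic (c n))) (c n) := le_max_right _ _
        _ < _ + 1 := by rw [Ordinal.add_one_eq_succ]; exact Order.lt_succ _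
      set γ := sSup (Set.range c) with hγdef
      have hbdd : BddAbove (Set.range c) :=
        bddAbove_of_lt_omega1 (by rintro x ⟨n, rfl⟩; exact hclt n)
      have hγlt : γ < ω1 :=
        sSup_lt_omega1 (Set.countable_range c) (by rintro x ⟨n, rfl⟩; exact hclt n)
      have hle : ∀ n, c n ≤ γ := fun n => le_csSup hbdd ⟨n, rfl⟩
      have hcofinal : ∀ x < γ, ∃ n, x < c n := by
        intro x hx
        obtain ⟨a, ⟨n, rfl⟩, hlt⟩ := exists_lt_of_lt_csSup (Set.range_nonempty c) hx
        exact ⟨n, hlt⟩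
      have hγlim : Order.IsSuccLimit γ := by
        rw [Ordinal.isSuccLimit_iff, Order.isSuccPrelimit_iff_succ_lt]
        constructor
        · have : (0 : Ordinal.{0}) < c 1 := lt_of_le_of_lt zero_le (hcmono 0)
          exact (lt_of_lt_of_le this (hle 1)).ne'
        · intro x hx
          obtain ⟨n, hn⟩ := hcofinal x hx
          exact lt_of_lt_of_le (lt_of_le_of_lt (Order.succ_le_of_lt hn) (hcmono n)) (hle (n+1))
      refine ⟨γ, ⟨hγlt, hγlim, ?_⟩, (hc0 ▸ hle 0)⟩
      intro β hβ
      obtain ⟨n, hn⟩ := hcofinal β hβ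
      have hbd : BddAbove (g '' Set.Iic (c n)) := by
        apply bddAbove_of_lt_omega1
        rintro x ⟨y, hy, rfl⟩
        exact gfun_lt hC (lt_of_le_of_lt hy (hclt n))
      have h1 : g β ≤ sSup (g '' Set.Iic (c n)) := le_csSup hbd ⟨β, hn.le, rfl⟩
      calc g β ≤ sSup (g '' Set.Iic (c n)) := h1
      _ ≤ max (sSup (g '' Set.Iic (c n))) (c n) := le_max_left _ _
      _ < max (sSup (g '' Set.Iic (c n))) (c n) + 1 := by
          rw [Ordinal.add_one_eq_succ]; exact Order.lt_succ _
      _ = c (n + 1) := (hcs n).symm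
      _ ≤ γ := hle (n + 1)
    · -- closed
      intro s hs hne hlt
      by_cases hmem : sSup s ∈ s
      · exact hs hmem
      · have hslt : ∀ x ∈ s, x < sSup s := by
          intro x hx
          rcases lt_or_eq_of_le (le_csSup (bddAbove_of_lt_omega1
            (fun y hy => (hs hy).1)) hx) with h | h
          · exact h
          · exact absurd (h ▸ hx) hmem
        have hcof : ∀ β < sSup s, ∃ x ∈ s, β < x := fun β hβ =>
          exists_lt_of_lt_csSup hne hβ
        refine ⟨hlt, ?_, ?_⟩
        · rw [Ordinal.isSuccLimit_iff, Order.isSuccPrelimit_iff_succ_lt]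
          constructor
          · obtain ⟨x, hx⟩ := hne
            exact (lt_of_lt_of_le (hs hx).2.1.pos (le_csSup (bddAbove_of_lt_omega1
              (fun y hy => (hs hy).1)) hx)).ne'
          · intro β hβ
            obtain ⟨x, hx, hβx⟩ := hcof β hβ
            exact lt_of_lt_of_le ((hs hx).2.1.succ_lt hβx) (le_csSup
              (bddAbove_of_lt_omega1 (fun y hy => (hs hy).1)) hx)
        · intro β hβ
          obtain ⟨x, hx, hβx⟩ := hcof β hβ
          exact (( hs hx).2.2 β hβx).trans (hslt x hx)
  obtain ⟨γ, hγB, hγD⟩ := hB D hDclub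
  -- build the ω-chain converging to γ
  have hγ1 : γ < ω1 := hγD.1
  have hγlim : Order.IsSuccLimit γ := hγD.2.1
  obtain ⟨f, hf⟩ := (countable_Iio hγ1).exists_eq_range ⟨0, hγlim.pos⟩
  have hflt : ∀ n, f n < γ := fun n => by
    have : f n ∈ Set.Iio γ := hf ▸ Set.mem_range_self n
    exact this
  set b : ℕ → Ordinal.{0} := fun n => Nat.rec (f 0) (fun n x => max x (f (n+1)) + 1) n with hb
  have hb0 : b 0 = f 0 := rfl
  have hbs : ∀ n, b (n + 1) = max (b n) (f (n+1)) + 1 := fun n => rfl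
  have hblt : ∀ n, b n < γ := by
    intro n
    induction n with
    | zero => exact hflt 0
    | succ n ihn =>
      rw [hbs, Ordinal.add_one_eq_succ]
      exact hγlim.succ_lt (max_lt ihn (hflt (n+1)))
  have hbmono : ∀ n, b n < b (n + 1) := by
    intro n
    rw [hbs, Ordinal.add_one_eq_succ]
    exact lt_of_le_of_lt (le_max_left _ _) (Order.lt_succ _)
  have hfb : ∀ n, f n ≤ b n := by
    intro n
    cases n with
    | zero => exact le_of_eq hb0.symm
    | succ n =>
      rw [hbs, Ordinal.add_one_eq_succ]
      exact le_of_lt (lt_of_le_of_lt (le_max_right _ _) (Order.lt_succ _))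
  set τ := ⋃ n, chainF C (b n) with hτ
  have hτC : τ ∈ C := by
    apply hC.2.1
    · exact fun n => (chainF_spec hC (b n) ((hblt n).trans hγ1)).1
    · exact fun n => chainF_mono hC (hbmono n).le ((hblt (n+1)).trans hγ1)
  refine ⟨τ, hτC, γ, hγB, ?_⟩
  apply Set.eq_of_subset_of_subset
  · rintro x ⟨hx1, hx2⟩
    obtain ⟨n, hn⟩ := Set.mem_iUnion.1 hx1
    have : x < g (b n) := lt_gfun ⟨hn, hx2⟩
    exact this.trans (hγD.2.2 (b n) (hblt n))
  · intro x hx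
    have hxγ : x < γ := hx
    have : x ∈ Set.Iio γ := hx
    rw [hf] at this
    obtain ⟨n, rfl⟩ := this
    have hmem : f n ∈ chainF C (b (n+1)) := by
      apply (chainF_spec hC (b (n+1)) ((hblt (n+1)).trans hγ1)).2
      exact Or.inl (Or.inr (lt_of_le_of_lt (hfb n) (hbmono n)))
    exact ⟨Set.mem_iUnion.2 ⟨n+1, hmem⟩, hxγ.trans hγ1⟩

end
end Aux

theorem pst_projective_stationary (S T : Set (Set Ordinal.{0}))
    (AS AT : Set Ordinal.{0})
    (hAS : ∀ x ∈ AS, x < ω1) (hAT : ∀ x ∈ AT, x < ω1)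
    (hASs : StatBelow ω1 AS) (hATs : StatBelow ω1 AT)
    (hd : Disjoint AS AT)
    (hS : ProjStatOn AS S) (hT : ProjStatOn AT T) :
    ProjStat {σ | MemCtble ω2 σ ∧
      ((∃ γ ∈ AS, MeetO1 σ γ) → σ ∈ S) ∧ ((∃ γ ∈ AT, MeetO1 σ γ) → σ ∈ T)} := by
  intro B hB hBs C hC
  by_cases h1 : StatBelow ω1 (B ∩ AS)
  · obtain ⟨σ, ⟨hσS, γ, hγ, hm⟩, hσC⟩ := hS (B ∩ AS) Set.inter_subset_right h1 C hC
    refine ⟨σ, ⟨⟨hC.1 σ hσC, fun _ => hσS, ?_⟩, γ, hγ.1, hm⟩, hσC⟩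
    rintro ⟨γ', hγ'T, hm'⟩
    have hEq : γ = γ' := MeetO1_unique hm hm'
    exact absurd (hEq ▸ hγ'T) (fun hmem => Set.disjoint_left.1 hd hγ.2 hmem)
  by_cases h2 : StatBelow ω1 (B ∩ AT)
  · obtain ⟨σ, ⟨hσT, γ, hγ, hm⟩, hσC⟩ := hT (B ∩ AT) Set.inter_subset_right h2 C hC
    refine ⟨σ, ⟨⟨hC.1 σ hσC, ?_, fun _ => hσT⟩, γ, hγ.1, hm⟩, hσC⟩
    rintro ⟨γ', hγ'S, hm'⟩
    have hEq : γ = γ' := MeetO1_unique hm hm'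
    exact absurd hγ.2 (fun hmem => Set.disjoint_left.1 hd (hEq ▸ hγ'S) hmem)
  -- both traces nonstationary: use the projection lemma on B \ (AS ∪ AT)
  rw [StatBelow] at h1 h2
  push_neg at h1 h2
  obtain ⟨C1, hC1, hC1e⟩ := h1
  obtain ⟨C2, hC2, hC2e⟩ := h2
  have hB' : StatBelow ω1 (B \ (AS ∪ AT)) := by
    intro C0 hC0
    obtain ⟨x, hxB, hxC⟩ := hBs (C0 ∩ C1 ∩ C2) (club_inter (club_inter hC0 hC1) hC2)
    refine ⟨x, ⟨hxB, ?_⟩, hxC.1.1⟩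
    rintro (hx | hx)
    · exact Set.eq_empty_iff_forall_notMem.1 hC1e x ⟨⟨hxB, hx⟩, hxC.1.2⟩
    · exact Set.eq_empty_iff_forall_notMem.1 hC2e x ⟨⟨hxB, hx⟩, hxC.2⟩
  obtain ⟨τ, hτC, γ, hγ, hm⟩ := proj_lemma hC hB'
  refine ⟨τ, ⟨⟨hC.1 τ hτC, ?_, ?_⟩, γ, hγ.1, hm⟩, hτC⟩
  · rintro ⟨γ', hγ'S, hm'⟩
    exact absurd (Or.inl ((MeetO1_unique hm hm').symm ▸ hγ'S : γ ∈ AS)) hγ.2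
  · rintro ⟨γ', hγ'T, hm'⟩
    exact absurd (Or.inr ((MeetO1_unique hm hm').symm ▸ hγ'T : γ ∈ AT)) hγ.2
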